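/- Let k be a field, let h ∈ k[x] be an irreducible polynomial, and let L/k be a field extension such that h has a root θ ∈ L. If g ∈ k[x] is a polynomial such that g − θ (the image of g in L[x] with the constant θ subtracted) is irreducible over L, then the composite polynomial h ∘ g (that is, h(g(x))) is irreducible over k. -/

import Mathlib

open Polynomial

/-- The algebra automorphism of `k[X]` given by `X ↦ c • X` for `c ≠ 0`. -/
noncomputable def scaleVarEquiv {k : Type*} [Field k] (c : k) (hc : c ≠ 0) :
    Polynomial k ≃ₐ[k] Polynomial k :=
  AlgEquiv.ofAlgHom (aeval (C c * X)) (aeval (C c⁻¹ * X))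
    (by ext : 1; simp [← mul_assoc, ← C_mul, mul_inv_cancel₀ hc, inv_mul_cancel₀ hc])
    (by ext : 1; simp [← mul_assoc, ← C_mul, mul_inv_cancel₀ hc, inv_mul_cancel₀ hc])

/-- Let `k` be a field, `h ∈ k[x]` an irreducible polynomial, and `L/k` a
field extension such that `h` has a root `θ ∈ L`. If `g ∈ k[x]` is such that `g − θ` is
irreducible over `L`, then `h ∘ g` is irreducible over `k`. -/
theorem stmt12 (k L : Type*) [Field k] [Field L] [Algebra k L]
    (h : Polynomial k) (hh : Irreducible h) (θ : L) (hθ : Polynomial.aeval θ h = 0)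
    (g : Polynomial k) (hg : Irreducible (g.map (algebraMap k L) - Polynomial.C θ)) :
    Irreducible (h.comp g) := by
  -- the degree of `g` is positive
  have hgdeg : g.natDegree ≠ 0 := by
    intro e
    rw [eq_C_of_natDegree_eq_zero e, map_C, ← C_sub] at hg
    exact not_irreducible_C _ hg
  have hgne : g ≠ 0 := fun e => hgdeg (by simp [e])
  set c : k := g.leadingCoeff with hc
  have hcne : c ≠ 0 := leadingCoeff_ne_zero.mpr hgne
  -- monic version of `g`
  set g₀ : Polynomial k := g * C c⁻¹ with hg₀
  have hg₀m : g₀.Monic := monic_mul_leadingCoeff_inv hgne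
  have hg₀deg : g₀.degree = g.degree := degree_mul_leadingCoeff_inv g hgne
  -- `h₁ = h (c x)`, irreducible since it is the image of `h` under an automorphism
  set h₁ : Polynomial k := h.comp (C c * X) with hh₁
  have hh₁eq : h₁ = scaleVarEquiv c hcne h := by
    simp [scaleVarEquiv, hh₁, comp_eq_aeval]
  have hh₁irr : Irreducible h₁ := by
    rw [hh₁eq]
    exact (MulEquiv.irreducible_iff (scaleVarEquiv c hcne)).mpr hh
  have hh₁ne : h₁ ≠ 0 := hh₁irr.ne_zero
  -- monic version of `h₁`
  set f : Polynomial k := h₁ * C h₁.leadingCoeff⁻¹ with hf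
  have hfm : f.Monic := monic_mul_leadingCoeff_inv hh₁ne
  have hlcu : IsUnit (C h₁.leadingCoeff⁻¹) :=
    isUnit_C.mpr (isUnit_iff_ne_zero.mpr (inv_ne_zero (leadingCoeff_ne_zero.mpr hh₁ne)))
  have hfirr : Irreducible f := (irreducible_mul_isUnit hlcu).mpr hh₁irr
  -- `θ' = θ / c` is a root of `f`
  set θ' : L := (algebraMap k L c)⁻¹ * θ with hθ'
  have hcL : algebraMap k L c ≠ 0 := by
    simpa using (map_ne_zero_iff (algebraMap k L) (algebraMap k L).injective).mpr hcne
  have hrootθ' : aeval θ' f = 0 := by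
    have : aeval θ' h₁ = 0 := by
      rw [hh₁, aeval_comp]
      have : aeval θ' (C c * X) = θ := by
        simp [hθ', aeval_C, ← mul_assoc, mul_inv_cancel₀ hcL]
      rw [this, hθ]
    simp [hf, this]
  have hθ'int : IsIntegral k θ' := ⟨f, hfm, hrootθ'⟩
  have hminθ' : minpoly k θ' = f := (minpoly.eq_of_irreducible_of_monic hfirr hrootθ' hfm).symm
  -- irreducibility of `g₀ - θ'` over `L`
  have hgLirr : Irreducible (g₀.map (algebraMap k L) - C θ') := by
    have key : g₀.map (algebraMap k L) - C θ' =
        C (algebraMap k L c)⁻¹ * (g.map (algebraMap k L) - C θ) := by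
      rw [hg₀, Polynomial.map_mul, map_C, map_inv₀, hθ', C_mul]
      ring
    rw [key]
    exact (irreducible_isUnit_mul
      (isUnit_C.mpr (isUnit_iff_ne_zero.mpr (inv_ne_zero hcL)))).mpr hg
  -- apply the main lemma
  have main : Irreducible (f.comp g₀) := by
    refine Polynomial.irreducible_comp hfm hg₀m hfirr ?_
    intro E _ _ x hx
    have hxint : IsIntegral k x := minpoly.ne_zero_iff.mp (hx ▸ hfm.ne_zero)
    -- equivalence `k⟮x⟯ ≃ₐ[k] k⟮θ'⟯`
    let e : (IntermediateField.adjoin k {x} : IntermediateField k E) ≃ₐ[k]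
        (IntermediateField.adjoin k {θ'} : IntermediateField k L) :=
      ((IntermediateField.adjoinRootEquivAdjoin k hxint).symm.trans
        (AdjoinRoot.algEquivOfEq k _ _ (hx.trans hminθ'.symm))).trans
        (IntermediateField.adjoinRootEquivAdjoin k hθ'int)
    have hegen : e (IntermediateField.AdjoinSimple.gen k x) =
        IntermediateField.AdjoinSimple.gen k θ' := by
      simp only [e, AlgEquiv.trans_apply,
        IntermediateField.adjoinRootEquivAdjoin_symm_apply_gen,
        AdjoinRoot.algEquivOfEq_root,
        IntermediateField.adjoinRootEquivAdjoin_apply_root]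
    -- the target is the image under `e` of the corresponding polynomial over `k⟮θ'⟯`
    have hmapeq : (g₀.map (algebraMap k _) - C (IntermediateField.AdjoinSimple.gen k x)).map
          (e.toRingEquiv : _ →+* _) =
        g₀.map (algebraMap k _) - C (IntermediateField.AdjoinSimple.gen k θ') := by
      rw [Polynomial.map_sub, map_C, Polynomial.map_map]
      congr 1
      · exact congrArg (Polynomial.map · g₀) (e.toAlgHom.comp_algebraMap)
      · exact congrArg C hegen
    rw [← MulEquiv.irreducible_iff (Polynomial.mapEquiv e.toRingEquiv)]
    show Irreducible ((g₀.map (algebraMap k _) -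
      C (IntermediateField.AdjoinSimple.gen k x)).map (e.toRingEquiv : _ →+*
        (IntermediateField.adjoin k {θ'} : IntermediateField k L)))
    rw [hmapeq]
    -- irreducible over `k⟮θ'⟯` because irreducible over `L` and monic
    set q : Polynomial (IntermediateField.adjoin k {θ'} : IntermediateField k L) :=
      g₀.map (algebraMap k _) - C (IntermediateField.AdjoinSimple.gen k θ') with hq
    have hqm : q.Monic := by
      refine (hg₀m.map _).sub_of_left ?_
      refine lt_of_le_of_lt degree_C_le ?_
      rw [degree_map]
      rw [hg₀deg]
      exact natDegree_pos_iff_degree_pos.mp (Nat.pos_of_ne_zero hgdeg)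
    refine hqm.irreducible_of_irreducible_map
      (algebraMap (IntermediateField.adjoin k {θ'} : IntermediateField k L) L) q ?_
    have : q.map (algebraMap _ L) = g₀.map (algebraMap k L) - C θ' := by
      rw [hq, Polynomial.map_sub, map_C, Polynomial.map_map,
        IntermediateField.AdjoinSimple.algebraMap_gen,
        ← IsScalarTower.algebraMap_eq]
    rw [this]
    exact hgLirr
  -- transfer back to `h.comp g`
  have hcomp : f.comp g₀ = h.comp g * C h₁.leadingCoeff⁻¹ := by
    rw [hf, mul_comp, C_comp, hh₁, comp_assoc]
    congr 2
    rw [mul_comp, C_comp, X_comp, hg₀, mul_comm (C c) (g * C c⁻¹), mul_assoc, ← C_mul,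
      inv_mul_cancel₀ hcne, C_1, mul_one]
  rw [hcomp] at main
  exact (irreducible_mul_isUnit hlcu).mp main
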